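/- Under the assumptions of the previous statement, the matrix exponential satisfies $\|e^{t(A - \frac{1}{2}\Sigma_\infty H^\top H)}\|_2 \le \sqrt{\mathrm{cond}(\Sigma_\infty)}\, e^{-\beta t}$ for all $t \ge 0$, where $\beta = \lambda_{\min}(\Sigma_B)/(2\lambda_{\max}(\Sigma_\infty))$ and $\mathrm{cond}(\Sigma_\infty) = \|\Sigma_\infty\|_2 \|\Sigma_\infty^{-1}\|_2$. -/

import Mathlib

open Matrix Real

/-- The spectral (ℓ²-operator) norm of a real square matrix. -/
noncomputable def specNorm {d : ℕ} (M : Matrix (Fin d) (Fin d) ℝ) : ℝ :=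
  ‖(Matrix.toEuclideanCLM (𝕜 := ℝ) M : EuclideanSpace ℝ (Fin d) →L[ℝ] EuclideanSpace ℝ (Fin d))‖

open scoped RealInnerProductSpace

section aux

variable {d : ℕ}

lemma norm_exp_smul_apply_le {E : Type*} [NormedAddCommGroup E] [InnerProductSpace ℝ E]
    [CompleteSpace E] (T : E →L[ℝ] E) (β : ℝ) (h : ∀ x : E, ⟪T x, x⟫ ≤ -β * ‖x‖ ^ 2)
    {t : ℝ} (ht : 0 ≤ t) : ‖NormedSpace.exp (t • T)‖ ≤ Real.exp (-β * t) := by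
  rw [ContinuousLinearMap.opNorm_le_iff (Real.exp_pos _).le]
  intro x
  set g : ℝ → E := fun s => Real.exp (β * s) • (NormedSpace.exp (s • T)) x with hg
  have hgd : ∀ s : ℝ, HasDerivAt g
      ((β * Real.exp (β * s)) • (NormedSpace.exp (s • T)) x
        + Real.exp (β * s) • T ((NormedSpace.exp (s • T)) x)) s := by
    intro s
    have h1 : HasDerivAt (fun u : ℝ => (NormedSpace.exp (u • T)) x)
        (T ((NormedSpace.exp (s • T)) x)) s := by
      have h0 := (hasDerivAt_exp_smul_const' (𝕂 := ℝ) T s).clm_apply (hasDerivAt_const s x)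
      simpa using h0
    have h2 : HasDerivAt (fun u : ℝ => Real.exp (β * u)) (β * Real.exp (β * s)) s := by
      exact ((Real.hasDerivAt_exp (β * s)).comp s
        ((hasDerivAt_id s).const_mul β)).congr_deriv (by simp only [id, mul_one]; ring)
    have h3 := h2.smul h1
    exact h3.congr_deriv (add_comm _ _)
  have key : ‖g t‖ ^ 2 ≤ ‖g 0‖ ^ 2 := by
    have hd : ∀ u : ℝ, HasDerivAt (fun u => ‖g u‖ ^ 2)
        (2 * ⟪((β * Real.exp (β * u)) • (NormedSpace.exp (u • T)) x
          + Real.exp (β * u) • T ((NormedSpace.exp (u • T)) x)), g u⟫) u := by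
      intro u
      have h4 := (hgd u).inner (𝕜 := ℝ) (hgd u)
      simp only [← real_inner_self_eq_norm_sq]
      refine h4.congr_deriv ?_
      rw [real_inner_comm (g u)]; ring
    have mono : AntitoneOn (fun u => ‖g u‖ ^ 2) (Set.Icc 0 t) := by
      apply antitoneOn_of_deriv_nonpos (convex_Icc 0 t)
      · intro u _
        exact (hd u).differentiableAt.continuousAt.continuousWithinAt
      · intro u _
        exact (hd u).differentiableAt.differentiableWithinAt
      · intro u _
        rw [(hd u).deriv]
        set y := (NormedSpace.exp (u • T)) x with hy
        have expand : ⟪((β * Real.exp (β * u)) • y + Real.exp (β * u) • T y), g u⟫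
            = Real.exp (β * u) ^ 2 * (β * ‖y‖ ^ 2 + ⟪T y, y⟫) := by
          simp only [hg, inner_add_left, real_inner_smul_left, real_inner_smul_right,
            ← hy, real_inner_self_eq_norm_sq]
          ring
        rw [expand]
        have hTy := h y
        nlinarith [Real.exp_pos (β * u), sq_nonneg (Real.exp (β * u))]
    exact mono (Set.left_mem_Icc.2 ht) (Set.right_mem_Icc.2 ht) ht
  have hg0 : g 0 = x := by simp [hg, NormedSpace.exp_zero]
  have hgt : ‖g t‖ = Real.exp (β * t) * ‖(NormedSpace.exp (t • T)) x‖ := by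
    simp [hg, norm_smul, abs_of_pos (Real.exp_pos _)]
  rw [hg0] at key
  have hle : ‖g t‖ ≤ ‖x‖ := by nlinarith [norm_nonneg (g t), norm_nonneg x]
  rw [hgt] at hle
  have hmul : Real.exp (-β * t) * Real.exp (β * t) = 1 := by
    rw [← Real.exp_add]; ring_nf; exact Real.exp_zero
  nlinarith [Real.exp_pos (β * t), norm_nonneg ((NormedSpace.exp (t • T)) x),
    Real.exp_pos (-β * t)]

lemma unitary_conj_smul_one (U : Matrix (Fin d) (Fin d) ℝ)
    (hU : U ∈ Matrix.unitaryGroup (Fin d) ℝ) (c : ℝ) :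
    U * (c • (1 : Matrix (Fin d) (Fin d) ℝ)) * star U = c • 1 := by
  rw [Matrix.mul_smul, Matrix.mul_one, Matrix.smul_mul,
    (Matrix.mem_unitaryGroup_iff).mp hU]

lemma posSemidef_sub_smul_one {M : Matrix (Fin d) (Fin d) ℝ} (hM : M.IsHermitian)
    (c : ℝ) (hc : ∀ i, c ≤ hM.eigenvalues i) : (M - c • 1).PosSemidef := by
  nth_rewrite 1 [hM.spectral_theorem]
  rw [Unitary.conjStarAlgAut_apply]
  have hD : Matrix.diagonal (RCLike.ofReal ∘ hM.eigenvalues) - c • (1 : Matrix (Fin d) (Fin d) ℝ)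
      = Matrix.diagonal (fun i => hM.eigenvalues i - c) := by
    ext i j
    rcases eq_or_ne i j with h | h <;>
      simp [h, Matrix.one_apply, Matrix.diagonal_apply, Function.comp]
  rw [← unitary_conj_smul_one _ (hM.eigenvectorUnitary).2 c, ← Matrix.sub_mul, ← Matrix.mul_sub,
    hD, Matrix.star_eq_conjTranspose]
  exact Matrix.PosSemidef.mul_mul_conjTranspose_same
    (Matrix.posSemidef_diagonal_iff.mpr fun i => sub_nonneg.mpr (hc i)) _

lemma posSemidef_smul_one_sub {M : Matrix (Fin d) (Fin d) ℝ} (hM : M.IsHermitian)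
    (c : ℝ) (hc : ∀ i, hM.eigenvalues i ≤ c) : (c • 1 - M).PosSemidef := by
  nth_rewrite 1 [hM.spectral_theorem]
  rw [Unitary.conjStarAlgAut_apply]
  have hD : c • (1 : Matrix (Fin d) (Fin d) ℝ) - Matrix.diagonal (RCLike.ofReal ∘ hM.eigenvalues)
      = Matrix.diagonal (fun i => c - hM.eigenvalues i) := by
    ext i j
    rcases eq_or_ne i j with h | h <;>
      simp [h, Matrix.one_apply, Matrix.diagonal_apply, Function.comp]
  rw [← unitary_conj_smul_one _ (hM.eigenvectorUnitary).2 c, ← Matrix.sub_mul, ← Matrix.mul_sub,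
    hD, Matrix.star_eq_conjTranspose]
  exact Matrix.PosSemidef.mul_mul_conjTranspose_same
    (Matrix.posSemidef_diagonal_iff.mpr fun i => sub_nonneg.mpr (hc i)) _

lemma posSemidef_smul {M : Matrix (Fin d) (Fin d) ℝ} (hM : M.PosSemidef) {c : ℝ} (hc : 0 ≤ c) :
    (c • M).PosSemidef := by
  exact hM.smul hc

lemma inner_toCLM (M : Matrix (Fin d) (Fin d) ℝ) (x : EuclideanSpace ℝ (Fin d)) :
    ⟪(Matrix.toEuclideanCLM (𝕜 := ℝ) M) x, x⟫
      = (WithLp.equiv 2 _ x) ⬝ᵥ M *ᵥ (WithLp.equiv 2 _ x) := by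
  rw [EuclideanSpace.inner_eq_star_dotProduct]
  simp only [Matrix.toEuclideanCLM, dotProduct_comm]
  rfl

lemma inner_toCLM_ge {M : Matrix (Fin d) (Fin d) ℝ} {c : ℝ}
    (h : (M - c • 1).PosSemidef) (x : EuclideanSpace ℝ (Fin d)) :
    c * ‖x‖ ^ 2 ≤ ⟪(Matrix.toEuclideanCLM (𝕜 := ℝ) M) x, x⟫ := by
  have h0 := h.dotProduct_mulVec_nonneg (WithLp.equiv 2 _ x)
  simp only [Matrix.sub_mulVec, dotProduct_sub, Matrix.smul_mulVec,
    Matrix.one_mulVec, dotProduct_smul, star_trivial, smul_eq_mul] at h0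
  rw [inner_toCLM]
  have hx : (WithLp.equiv 2 _ x) ⬝ᵥ (WithLp.equiv 2 _ x) = ‖x‖ ^ 2 := by
    rw [← real_inner_self_eq_norm_sq, EuclideanSpace.inner_eq_star_dotProduct]
    rfl
  rw [hx] at h0
  linarith

lemma toCLM_exp (M : Matrix (Fin d) (Fin d) ℝ) :
    Matrix.toEuclideanCLM (𝕜 := ℝ) (NormedSpace.exp M)
      = NormedSpace.exp (Matrix.toEuclideanCLM (𝕜 := ℝ) M) := by
  letI : SeminormedRing (Matrix (Fin d) (Fin d) ℝ) := Matrix.linftyOpSemiNormedRing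
  letI : NormedRing (Matrix (Fin d) (Fin d) ℝ) := Matrix.linftyOpNormedRing
  letI : NormedAlgebra ℝ (Matrix (Fin d) (Fin d) ℝ) := Matrix.linftyOpNormedAlgebra
  letI : NormedAlgebra ℚ (Matrix (Fin d) (Fin d) ℝ) := Matrix.linftyOpNormedAlgebra
  refine NormedSpace.map_exp (Matrix.toEuclideanCLM (𝕜 := ℝ) (n := Fin d)) ?_ M
  exact LinearMap.continuous_of_finiteDimensional
    ({ toFun := ⇑(Matrix.toEuclideanCLM (𝕜 := ℝ) (n := Fin d)),
       map_add' := fun a b => map_add _ a b,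
       map_smul' := fun c a => map_smul _ c a } :
      Matrix (Fin d) (Fin d) ℝ →ₗ[ℝ] (EuclideanSpace ℝ (Fin d) →L[ℝ] EuclideanSpace ℝ (Fin d)))

lemma inner_toCLM_left (M : Matrix (Fin d) (Fin d) ℝ) (x y : EuclideanSpace ℝ (Fin d)) :
    ⟪(Matrix.toEuclideanCLM (𝕜 := ℝ) M) x, y⟫
      = (M *ᵥ (WithLp.equiv 2 _ x)) ⬝ᵥ (WithLp.equiv 2 _ y) := by
  rw [EuclideanSpace.inner_eq_star_dotProduct, dotProduct_comm]
  rfl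

lemma specNorm_le_sqrt_sq {M : Matrix (Fin d) (Fin d) ℝ} (hM : Mᵀ = M) :
    specNorm M ≤ Real.sqrt (specNorm (M * M)) := by
  apply ContinuousLinearMap.opNorm_le_bound _ (Real.sqrt_nonneg _)
  intro x
  have h1 : ⟪(Matrix.toEuclideanCLM (𝕜 := ℝ) M) x, (Matrix.toEuclideanCLM (𝕜 := ℝ) M) x⟫
      = (M *ᵥ (WithLp.equiv 2 (Fin d → ℝ) x)) ⬝ᵥ (M *ᵥ (WithLp.equiv 2 (Fin d → ℝ) x)) := by
    rw [inner_toCLM_left]; rfl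
  have h2 : ((M * M) *ᵥ (WithLp.equiv 2 (Fin d → ℝ) x)) ⬝ᵥ (WithLp.equiv 2 (Fin d → ℝ) x)
      = (M *ᵥ (WithLp.equiv 2 (Fin d → ℝ) x)) ⬝ᵥ (M *ᵥ (WithLp.equiv 2 (Fin d → ℝ) x)) := by
    rw [← Matrix.mulVec_mulVec, dotProduct_comm, Matrix.dotProduct_mulVec]
    nth_rewrite 1 [← hM]
    rw [Matrix.vecMul_transpose]
  have hsq : ‖(Matrix.toEuclideanCLM (𝕜 := ℝ) M) x‖ ^ 2
      = ⟪(Matrix.toEuclideanCLM (𝕜 := ℝ) (M * M)) x, x⟫ := by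
    rw [← real_inner_self_eq_norm_sq, h1, inner_toCLM_left, h2]
  have h5 : ‖(Matrix.toEuclideanCLM (𝕜 := ℝ) M) x‖ ^ 2 ≤ specNorm (M * M) * ‖x‖ ^ 2 := by
    rw [hsq]
    calc ⟪(Matrix.toEuclideanCLM (𝕜 := ℝ) (M * M)) x, x⟫
        ≤ ‖(Matrix.toEuclideanCLM (𝕜 := ℝ) (M * M)) x‖ * ‖x‖ := real_inner_le_norm _ _
      _ ≤ ‖(Matrix.toEuclideanCLM (𝕜 := ℝ) (M * M) :
            EuclideanSpace ℝ (Fin d) →L[ℝ] EuclideanSpace ℝ (Fin d))‖ * ‖x‖ * ‖x‖ :=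
          mul_le_mul_of_nonneg_right
            ((Matrix.toEuclideanCLM (𝕜 := ℝ) (M * M)).le_opNorm x) (norm_nonneg _)
      _ = specNorm (M * M) * ‖x‖ ^ 2 := by rw [specNorm]; ring
  have h6 := Real.sqrt_le_sqrt h5
  rwa [Real.sqrt_sq (norm_nonneg _), Real.sqrt_mul (by rw [specNorm]; positivity),
    Real.sqrt_sq (norm_nonneg x)] at h6

end aux

set_option maxHeartbeats 1000000

/-- `‖e^{t(A - ½ Σ∞ Hᵀ H)}‖₂ ≤ √cond(Σ∞) e^{-βt}` for `t ≥ 0`, where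
`Σ∞ ≻ 0` solves the ARE with `Σ_B ≻ 0`, `β = λmin(Σ_B)/(2 λmax(Σ∞))`, and
`cond(Σ∞) = ‖Σ∞‖₂ ‖Σ∞⁻¹‖₂`. -/
theorem stmt1 {d m : ℕ} [NeZero d]
    (A : Matrix (Fin d) (Fin d) ℝ) (H : Matrix (Fin m) (Fin d) ℝ)
    (SB Sinf : Matrix (Fin d) (Fin d) ℝ)
    (hSB : SB.PosDef) (hSinf : Sinf.PosDef)
    (hARE : A * Sinf + Sinf * Aᵀ + SB - Sinf * Hᵀ * H * Sinf = 0) :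
    ∀ t : ℝ, 0 ≤ t →
      specNorm (NormedSpace.exp (t • (A - (1/2 : ℝ) • (Sinf * Hᵀ * H)))) ≤
        Real.sqrt (specNorm Sinf * specNorm Sinf⁻¹) *
          Real.exp (-((⨅ i, hSB.1.eigenvalues i) / (2 * ⨆ i, hSinf.1.eigenvalues i)) * t) := by
  intro t ht
  have hd0 : 0 < d := Nat.pos_of_ne_zero (NeZero.ne d)
  haveI : Nonempty (Fin d) := ⟨⟨0, hd0⟩⟩
  set lmin := ⨅ i, hSB.1.eigenvalues i with hlmin
  set lmax := ⨆ i, hSinf.1.eigenvalues i with hlmax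
  have hS : Sinf.PosSemidef := hSinf.posSemidef
  set R : Matrix (Fin d) (Fin d) ℝ := (open scoped MatrixOrder in CFC.sqrt Sinf) with hRdef
  have hRH : Rᴴ = R := by open scoped MatrixOrder in exact (CFC.sqrt_nonneg Sinf).posSemidef.1
  have hRT : Rᵀ = R := by rw [← Matrix.conjTranspose_eq_transpose_of_trivial, hRH]
  have hRR : R * R = Sinf := by
    open scoped MatrixOrder in exact CFC.sqrt_mul_sqrt_self Sinf hS.nonneg
  have hdetR : IsUnit R.det := by
    have h1 : IsUnit (R.det * R.det) := by
      rw [← Matrix.det_mul, hRR]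
      exact hSinf.det_pos.ne'.isUnit
    exact isUnit_of_mul_isUnit_left h1
  have hRu : IsUnit R := (Matrix.isUnit_iff_isUnit_det R).2 hdetR
  have hRinv : R * R⁻¹ = 1 := Matrix.mul_nonsing_inv R hdetR
  have hRinv' : R⁻¹ * R = 1 := Matrix.nonsing_inv_mul R hdetR
  have hRiT : (R⁻¹)ᵀ = R⁻¹ := by rw [Matrix.transpose_nonsing_inv, hRT]
  have hST : Sinfᵀ = Sinf := by rw [← Matrix.conjTranspose_eq_transpose_of_trivial, hSinf.1]
  have hSiRR : Sinf⁻¹ = R⁻¹ * R⁻¹ := by rw [← hRR, Matrix.mul_inv_rev]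
  set F : Matrix (Fin d) (Fin d) ℝ := A - (1/2 : ℝ) • (Sinf * Hᵀ * H) with hFdef
  set G : Matrix (Fin d) (Fin d) ℝ := R⁻¹ * F * R with hGdef
  -- the Lyapunov identity
  have hKey : Sinf * Hᵀ * H * Sinf = A * Sinf + Sinf * Aᵀ + SB := (sub_eq_zero.mp hARE).symm
  have hLyap : F * Sinf + Sinf * Fᵀ = -SB := by
    rw [hFdef, Matrix.transpose_sub, Matrix.transpose_smul, Matrix.transpose_mul,
      Matrix.transpose_mul, Matrix.transpose_transpose, hST]
    simp only [Matrix.sub_mul, Matrix.mul_sub, Matrix.smul_mul, Matrix.mul_smul,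
      Matrix.mul_assoc]
    simp only [Matrix.mul_assoc] at hKey
    rw [hKey]
    module
  -- G + Gᵀ
  have hGT : (R⁻¹ * F * R)ᵀ = R * (Fᵀ * R⁻¹) := by
    rw [Matrix.transpose_mul, Matrix.transpose_mul, hRT, hRiT]
  have e1 : R⁻¹ * (F * (R * R)) * R⁻¹ = R⁻¹ * F * R := by
    rw [show R⁻¹ * (F * (R * R)) * R⁻¹ = R⁻¹ * F * R * (R * R⁻¹) from by noncomm_ring,
      hRinv, Matrix.mul_one]
  have e2 : R⁻¹ * ((R * R) * Fᵀ) * R⁻¹ = R * (Fᵀ * R⁻¹) := by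
    rw [show R⁻¹ * ((R * R) * Fᵀ) * R⁻¹ = (R⁻¹ * R) * (R * (Fᵀ * R⁻¹)) from by noncomm_ring,
      hRinv', Matrix.one_mul]
  have hGsum : G + Gᵀ = -(R⁻¹ * SB * R⁻¹) := by
    rw [hGdef, hGT]
    calc R⁻¹ * F * R + R * (Fᵀ * R⁻¹)
        = R⁻¹ * (F * (R * R)) * R⁻¹ + R⁻¹ * ((R * R) * Fᵀ) * R⁻¹ := by rw [e1, e2]
      _ = R⁻¹ * (F * Sinf + Sinf * Fᵀ) * R⁻¹ := by
          rw [← Matrix.add_mul, ← Matrix.mul_add, hRR]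
      _ = R⁻¹ * (-SB) * R⁻¹ := by rw [hLyap]
      _ = -(R⁻¹ * SB * R⁻¹) := by rw [Matrix.mul_neg, Matrix.neg_mul]
  -- eigenvalue bounds
  have hbddB : ∀ i, lmin ≤ hSB.1.eigenvalues i := fun i => ciInf_le (Finite.bddBelow_range _) i
  have hbddS : ∀ i, hSinf.1.eigenvalues i ≤ lmax := fun i => le_ciSup (Finite.bddAbove_range _) i
  have hlmaxpos : 0 < lmax := lt_of_lt_of_le (hSinf.eigenvalues_pos ⟨0, hd0⟩) (hbddS ⟨0, hd0⟩)
  have hlminnn : 0 ≤ lmin := le_ciInf fun i => (hSB.eigenvalues_pos i).le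
  have psd1 : (SB - lmin • 1).PosSemidef := posSemidef_sub_smul_one hSB.1 lmin hbddB
  have psd2 : (lmax • 1 - Sinf).PosSemidef := posSemidef_smul_one_sub hSinf.1 lmax hbddS
  have hconj : ∀ {X : Matrix (Fin d) (Fin d) ℝ}, X.PosSemidef → (R⁻¹ * X * R⁻¹).PosSemidef := by
    intro X hX
    have h := hX.mul_mul_conjTranspose_same R⁻¹
    rwa [Matrix.conjTranspose_nonsing_inv, hRH] at h
  have psd1' : (R⁻¹ * SB * R⁻¹ - lmin • Sinf⁻¹).PosSemidef := by
    have h := hconj psd1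
    have he : R⁻¹ * (SB - lmin • 1) * R⁻¹ = R⁻¹ * SB * R⁻¹ - lmin • Sinf⁻¹ := by
      rw [Matrix.mul_sub, Matrix.sub_mul, Matrix.mul_smul, Matrix.mul_one, Matrix.smul_mul, hSiRR]
    rwa [he] at h
  have psd2' : (lmax • Sinf⁻¹ - 1).PosSemidef := by
    have h := hconj psd2
    have he : R⁻¹ * (lmax • 1 - Sinf) * R⁻¹ = lmax • Sinf⁻¹ - 1 := by
      rw [Matrix.mul_sub, Matrix.sub_mul, Matrix.mul_smul, Matrix.mul_one, Matrix.smul_mul, hSiRR]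
      rw [← hRR, show R⁻¹ * (R * R) * R⁻¹ = (R⁻¹ * R) * (R * R⁻¹) from by noncomm_ring,
        hRinv, hRinv', Matrix.one_mul]
    rwa [he] at h
  have psdN : (R⁻¹ * SB * R⁻¹ - (lmin / lmax) • 1).PosSemidef := by
    have hsplit : R⁻¹ * SB * R⁻¹ - (lmin / lmax) • (1 : Matrix (Fin d) (Fin d) ℝ)
        = (R⁻¹ * SB * R⁻¹ - lmin • Sinf⁻¹) + (lmin / lmax) • (lmax • Sinf⁻¹ - 1) := by
      rw [smul_sub, smul_smul, div_mul_cancel₀ _ hlmaxpos.ne']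
      abel
    rw [hsplit]
    exact psd1'.add (posSemidef_smul psd2' (by positivity))
  -- quadratic bound for the conjugated generator
  have hquad : ∀ x : EuclideanSpace ℝ (Fin d),
      ⟪(Matrix.toEuclideanCLM (𝕜 := ℝ) G) x, x⟫ ≤ -(lmin / (2 * lmax)) * ‖x‖ ^ 2 := by
    intro x
    have hlow := inner_toCLM_ge psdN x
    have hT : ⟪(Matrix.toEuclideanCLM (𝕜 := ℝ) Gᵀ) x, x⟫
        = ⟪(Matrix.toEuclideanCLM (𝕜 := ℝ) G) x, x⟫ := by
      rw [inner_toCLM, inner_toCLM, Matrix.dotProduct_mulVec, Matrix.vecMul_transpose,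
        dotProduct_comm]
    have hsum : ⟪(Matrix.toEuclideanCLM (𝕜 := ℝ) (G + Gᵀ)) x, x⟫
        = 2 * ⟪(Matrix.toEuclideanCLM (𝕜 := ℝ) G) x, x⟫ := by
      rw [map_add, ContinuousLinearMap.add_apply, inner_add_left, hT]
      ring
    rw [hGsum, map_neg, ContinuousLinearMap.neg_apply, inner_neg_left] at hsum
    have h2 : ⟪(Matrix.toEuclideanCLM (𝕜 := ℝ) (R⁻¹ * SB * R⁻¹)) x, x⟫ ≥ (lmin / lmax) * ‖x‖ ^ 2 :=
      hlow
    have hx2 : (0 : ℝ) ≤ ‖x‖ ^ 2 := sq_nonneg _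
    have h3 : lmin / lmax = 2 * (lmin / (2 * lmax)) := by field_simp
    nlinarith [h2, hsum]
  have hcore : ‖NormedSpace.exp (t • Matrix.toEuclideanCLM (𝕜 := ℝ) G)‖
      ≤ Real.exp (-(lmin / (2 * lmax)) * t) := norm_exp_smul_apply_le _ _ hquad ht
  -- conjugate the exponential
  have hconjF : NormedSpace.exp (t • F) = R * NormedSpace.exp (t • G) * R⁻¹ := by
    have h1 : t • F = R * (t • G) * R⁻¹ := by
      rw [hGdef, Matrix.mul_smul, Matrix.smul_mul]
      congr 1
      rw [show R * (R⁻¹ * F * R) * R⁻¹ = (R * R⁻¹) * F * (R * R⁻¹) from by noncomm_ring,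
        hRinv, Matrix.one_mul, Matrix.mul_one]
    rw [h1, Matrix.exp_conj R (t • G) hRu]
  -- norm estimates
  have hspec : specNorm (NormedSpace.exp (t • F))
      ≤ specNorm R * Real.exp (-(lmin / (2 * lmax)) * t) * specNorm R⁻¹ := by
    have hrw : (Matrix.toEuclideanCLM (𝕜 := ℝ) (NormedSpace.exp (t • F)))
        = Matrix.toEuclideanCLM (𝕜 := ℝ) R
            * NormedSpace.exp (t • Matrix.toEuclideanCLM (𝕜 := ℝ) G)
            * Matrix.toEuclideanCLM (𝕜 := ℝ) R⁻¹ := by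
      rw [hconjF, _root_.map_mul, _root_.map_mul, toCLM_exp, _root_.map_smul]
    show ‖(Matrix.toEuclideanCLM (𝕜 := ℝ) (NormedSpace.exp (t • F)))‖ ≤ _
    rw [hrw]
    calc ‖Matrix.toEuclideanCLM (𝕜 := ℝ) R
            * NormedSpace.exp (t • Matrix.toEuclideanCLM (𝕜 := ℝ) G)
            * Matrix.toEuclideanCLM (𝕜 := ℝ) R⁻¹‖
        ≤ ‖Matrix.toEuclideanCLM (𝕜 := ℝ) R
            * NormedSpace.exp (t • Matrix.toEuclideanCLM (𝕜 := ℝ) G)‖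
          * ‖(Matrix.toEuclideanCLM (𝕜 := ℝ) R⁻¹ :
              EuclideanSpace ℝ (Fin d) →L[ℝ] EuclideanSpace ℝ (Fin d))‖ := norm_mul_le _ _
      _ ≤ ‖(Matrix.toEuclideanCLM (𝕜 := ℝ) R :
              EuclideanSpace ℝ (Fin d) →L[ℝ] EuclideanSpace ℝ (Fin d))‖
          * ‖NormedSpace.exp (t • Matrix.toEuclideanCLM (𝕜 := ℝ) G)‖
          * ‖(Matrix.toEuclideanCLM (𝕜 := ℝ) R⁻¹ :
              EuclideanSpace ℝ (Fin d) →L[ℝ] EuclideanSpace ℝ (Fin d))‖ :=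
          mul_le_mul_of_nonneg_right (norm_mul_le _ _) (norm_nonneg _)
      _ ≤ specNorm R * Real.exp (-(lmin / (2 * lmax)) * t) * specNorm R⁻¹ := by
          apply mul_le_mul_of_nonneg_right _ (norm_nonneg _)
          exact mul_le_mul_of_nonneg_left hcore (norm_nonneg _)
  have hfin1 : specNorm R ≤ Real.sqrt (specNorm Sinf) := by
    have h := specNorm_le_sqrt_sq hRT
    rwa [hRR] at h
  have hfin2 : specNorm R⁻¹ ≤ Real.sqrt (specNorm Sinf⁻¹) := by
    have h := specNorm_le_sqrt_sq hRiT
    rwa [← hSiRR] at h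
  have hnn1 : 0 ≤ specNorm R := norm_nonneg _
  have hnn2 : 0 ≤ specNorm R⁻¹ := norm_nonneg _
  have hnnS : 0 ≤ specNorm Sinf := norm_nonneg _
  have hEpos : 0 < Real.exp (-(lmin / (2 * lmax)) * t) := Real.exp_pos _
  calc specNorm (NormedSpace.exp (t • F))
      ≤ specNorm R * Real.exp (-(lmin / (2 * lmax)) * t) * specNorm R⁻¹ := hspec
    _ ≤ Real.sqrt (specNorm Sinf) * Real.exp (-(lmin / (2 * lmax)) * t)
        * Real.sqrt (specNorm Sinf⁻¹) := by
        apply mul_le_mul _ hfin2 hnn2 (by positivity)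
        exact mul_le_mul_of_nonneg_right hfin1 hEpos.le
    _ = Real.sqrt (specNorm Sinf * specNorm Sinf⁻¹)
        * Real.exp (-(lmin / (2 * lmax)) * t) := by
        rw [Real.sqrt_mul hnnS]
        ring
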